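/- For m = (1+ε)n with ε > 0 (m ≥ 6n suffices for the stated constant), the expected number of labeled trees with k vertices appearing as subgraphs of the random bipartite multigraph G(S,h_1,h_2) with fully random hash functions is at most 2m²·(e/3)^k when m ≥ 6n; in particular, for k ≥ β log n with β a sufficiently large constant, this expectation is O(n^{-α}) for any fixed α. -/

import Mathlib

/-!
Multigraphs are modeled by a map `ends : E → Sym2 V` assigning to each edge its
pair of endpoints.  Subgraphs are given by subsets `F : Finset E` of edges
(together with their incident vertices; isolated vertices are disregarded).
-/

open Finset

variable {V E : Type*}

-- Vertices incident to at least one edge of `F` (isolated vertices disregarded).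
open Classical in
noncomputable def vertsOf [Fintype V] (ends : E → Sym2 V) (F : Finset E) : Finset V :=
  Finset.univ.filter fun v => ∃ e ∈ F, v ∈ ends e

-- Degree of `v` in the multigraph with edge set `F` (loops count twice).
open Classical in
noncomputable def degIn (ends : E → Sym2 V) (F : Finset E) (v : V) : ℕ :=
  2 * (F.filter fun e => ends e = s(v, v)).card +
    (F.filter fun e => v ∈ ends e ∧ ends e ≠ s(v, v)).card

/-- Adjacency via an edge of `F`. -/
def adjIn (ends : E → Sym2 V) (F : Finset E) (v w : V) : Prop :=
  ∃ e ∈ F, ends e = s(v, w)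

/-- The multigraph with edge set `F` is connected (on its non-isolated vertices). -/
def connIn [Fintype V] (ends : E → Sym2 V) (F : Finset E) : Prop :=
  ∀ v ∈ vertsOf ends F, ∀ w ∈ vertsOf ends F, Relation.ReflTransGen (adjIn ends F) v w

/-- The multigraph with edge set `F` is a forest (acyclic): every nonempty edge
subset has a vertex of degree at most one. -/
def isForest [Fintype V] (ends : E → Sym2 V) (F : Finset E) : Prop :=
  ∀ C ⊆ F, C.Nonempty → ∃ v ∈ vertsOf ends C, degIn ends C v ≤ 1

/-- The bipartite multigraph on `[m] ⊔ [m]` whose edge for key `x ∈ T` joins the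
left copy of `a(x).1` to the right copy of `a(x).2`. -/
def bipEnds {n m : ℕ} (T : Finset (Fin n)) (a : {x // x ∈ T} → Fin m × Fin m) :
    {x // x ∈ T} → Sym2 (Fin m ⊕ Fin m) :=
  fun x => s(Sum.inl (a x).1, Sum.inr (a x).2)

/-- The labeled subgraph given by `(T, a)` is a tree with `k` vertices. -/
def isTreeSub {n m : ℕ} (k : ℕ) (T : Finset (Fin n))
    (a : {x // x ∈ T} → Fin m × Fin m) : Prop :=
  connIn (bipEnds T a) Finset.univ ∧ isForest (bipEnds T a) Finset.univ ∧
    (vertsOf (bipEnds T a) Finset.univ).card = k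

-- Expected number of labeled trees with `k` vertices appearing as subgraphs of
-- `G(S,h₁,h₂)` with all `2n` hash values independent and uniform on `[m]`.
open Classical in
noncomputable def expTrees (n m k : ℕ) : ℝ :=
  ∑ T : Finset (Fin n), ∑ a : {x // x ∈ T} → Fin m × Fin m,
    if isTreeSub k T a then (1 / (m : ℝ)) ^ (2 * T.card) else 0

section Struct

variable {V E : Type*} [Fintype V] [DecidableEq V] [DecidableEq E]

lemma mem_vertsOf {ends : E → Sym2 V} {F : Finset E} {v : V} :
    v ∈ vertsOf ends F ↔ ∃ e ∈ F, v ∈ ends e := by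
  simp [vertsOf]

/-- Unique incident edge for a vertex of degree ≤ 1 in a loopless graph. -/
lemma unique_edge {ends : E → Sym2 V} {F : Finset E} {v : V}
    (hd : ∀ e ∈ F, ¬ (ends e).IsDiag) (hv : v ∈ vertsOf ends F)
    (hdeg : degIn ends F v ≤ 1) :
    ∃ x ∈ F, v ∈ ends x ∧ ∀ y ∈ F, v ∈ ends y → y = x := by
  classical
  obtain ⟨x, hxF, hvx⟩ := mem_vertsOf.mp hv
  refine ⟨x, hxF, hvx, fun y hyF hvy => ?_⟩
  by_contra hne
  have h2 : 2 ≤ degIn ends F v := by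
    unfold degIn
    refine le_trans ?_ (Nat.le_add_left _ _)
    refine le_trans (le_of_eq (Finset.card_pair hne).symm) (Finset.card_le_card ?_)
    intro e he
    simp only [Finset.mem_filter]
    rcases Finset.mem_insert.mp he with rfl | he
    · exact ⟨hyF, hvy, fun h => hd e hyF
        (by rw [h]; exact Sym2.mk_isDiag_iff.mpr rfl)⟩
    · rw [Finset.mem_singleton] at he; subst he
      exact ⟨hxF, hvx, fun h => hd e hxF
        (by rw [h]; exact Sym2.mk_isDiag_iff.mpr rfl)⟩
  omega

lemma tree_struct (ends : E → Sym2 V) :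
    ∀ F : Finset E, (∀ e ∈ F, ¬ (ends e).IsDiag) → connIn ends F → isForest ends F →
    F.Nonempty →
    ∃ (r : V) (child : E → V) (psel : E → Option E),
      (∀ x ∈ F, ∀ y, psel x = some y → y ∈ F) ∧
      (∀ x ∈ F, ends x = s(child x, (psel x).elim r child)) ∧
      vertsOf ends F = insert r (F.image child) ∧
      Set.InjOn child ↑F ∧ r ∉ F.image child := by
  intro F
  induction F using Finset.strongInduction with
  | _ F ih =>
  intro hd hc hf hne
  -- find a leaf
  obtain ⟨v, hv, hdeg⟩ := hf F (Finset.Subset.refl F) hne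
  obtain ⟨x, hxF, hvx, huniq⟩ := unique_edge hd hv hdeg
  obtain ⟨u, hxu⟩ := Sym2.mem_iff_exists.mp hvx
  have hvu : v ≠ u := fun h => hd x hxF (by rw [hxu, ← h]; exact Sym2.mk_isDiag_iff.mpr rfl)
  rcases eq_or_lt_of_le (Finset.one_le_card.mpr hne) with hcard1 | hcard2
  · -- base case : a single edge
    obtain ⟨x₀, hx0⟩ := Finset.card_eq_one.mp hcard1.symm
    have hxx0 : x = x₀ := by subst hx0; exact Finset.mem_singleton.mp hxF
    subst hxx0; subst hx0
    refine ⟨u, fun _ => v, fun _ => none, by simp, ?_, ?_, ?_, ?_⟩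
    · intro y hy
      rw [Finset.mem_singleton] at hy; subst hy; exact hxu
    · ext w
      simp only [mem_vertsOf, Finset.mem_singleton, Finset.image_singleton,
        Finset.mem_insert, exists_eq_left, hxu, Sym2.mem_iff]
      tauto
    · intro a ha b hb _
      rw [Finset.coe_singleton, Set.mem_singleton_iff] at ha hb
      rw [ha, hb]
    · rw [Finset.image_singleton, Finset.mem_singleton]
      exact fun h => hvu h.symm
  · -- inductive step
    -- `u` has another edge
    have hy : ∃ y ∈ F.erase x, u ∈ ends y := by
      by_contra hK
      push_neg at hK
      have reach : ∀ w, Relation.ReflTransGen (adjIn ends F) v w → w = v ∨ w = u := by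
        intro w h
        induction h with
        | refl => exact Or.inl rfl
        | @tail b c hab step ihr =>
          obtain ⟨e, heF, hec⟩ := step
          rcases ihr with rfl | rfl
          · have hex : e = x := huniq e heF (by rw [hec]; exact Sym2.mem_mk_left _ _)
            rw [hex, hxu] at hec
            rcases Sym2.eq_iff.mp hec with ⟨-, h2⟩ | ⟨-, h2⟩
            · exact Or.inr h2.symm
            · exact absurd h2.symm hvu
          · have hex : e = x := by
              by_contra hexne
              exact hK e (Finset.mem_erase.mpr ⟨hexne, heF⟩)
                (by rw [hec]; exact Sym2.mem_mk_left _ _)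
            rw [hex, hxu] at hec
            rcases Sym2.eq_iff.mp hec with ⟨h1, -⟩ | ⟨h1, -⟩
            · exact absurd h1 hvu
            · exact Or.inl h1.symm
      obtain ⟨z, hzF, hzx⟩ := Finset.exists_mem_ne hcard2 x
      have hp : (ends z).out.1 ∈ ends z := Sym2.out_fst_mem (ends z)
      set p := (ends z).out.1 with hpdef
      have hpV : p ∈ vertsOf ends F := mem_vertsOf.mpr ⟨z, hzF, hp⟩
      rcases reach p (hc v hv p hpV) with rfl | rfl
      · exact hzx (huniq z hzF hp)
      · exact hK z (Finset.mem_erase.mpr ⟨hzx, hzF⟩) hp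
    obtain ⟨y₀, hy₀F', hy₀u⟩ := hy
    set F' := F.erase x with hF'def
    have hssub : F' ⊂ F := Finset.erase_ssubset hxF
    have hsub : F' ⊆ F := Finset.erase_subset x F
    -- vertices of the smaller graph
    have hverase : vertsOf ends F' = (vertsOf ends F).erase v := by
      ext w
      simp only [mem_vertsOf, Finset.mem_erase]
      constructor
      · rintro ⟨e, heF', hwe⟩
        have heF := hsub heF'
        refine ⟨fun hwv => ?_, ⟨e, heF, hwe⟩⟩
        subst hwv
        exact (Finset.mem_erase.mp heF').1 (huniq e heF hwe)
      · rintro ⟨hwv, e, heF, hwe⟩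
        by_cases hex : e = x
        · subst hex
          rw [hxu, Sym2.mem_iff] at hwe
          rcases hwe with rfl | rfl
          · exact absurd rfl hwv
          · exact ⟨y₀, hy₀F', hy₀u⟩
        · exact ⟨e, Finset.mem_erase.mpr ⟨hex, heF⟩, hwe⟩
    have hvnot' : v ∉ vertsOf ends F' := by rw [hverase]; exact Finset.notMem_erase _ _
    -- rerouting walks around the removed leaf
    have reroute : ∀ ⦃b c : V⦄, Relation.ReflTransGen (adjIn ends F) b c → b ≠ v →
        ((c ≠ v → Relation.ReflTransGen (adjIn ends F') b c) ∧
         (c = v → Relation.ReflTransGen (adjIn ends F') b u)) := by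
      intro b c h hb
      induction h with
      | refl => exact ⟨fun _ => Relation.ReflTransGen.refl, fun h' => absurd h' hb⟩
      | @tail b' c' hab step ihr =>
        obtain ⟨e, heF, hec⟩ := step
        by_cases hbv : b' = v
        · subst hbv
          have hex : e = x := huniq e heF (by rw [hec]; exact Sym2.mem_mk_left _ _)
          rw [hex, hxu] at hec
          have hcu : c' = u := by
            rcases Sym2.eq_iff.mp hec with ⟨-, h2⟩ | ⟨-, h2⟩
            · exact h2.symm
            · exact absurd h2.symm hvu
          subst hcu
          refine ⟨fun _ => ihr.2 rfl, fun hc' => absurd hc' (Ne.symm hvu)⟩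
        · by_cases hcv : c' = v
          · subst hcv
            have hex : e = x := huniq e heF (by rw [hec]; exact Sym2.mem_mk_right _ _)
            rw [hex, hxu] at hec
            have hbu : b' = u := by
              rcases Sym2.eq_iff.mp hec with ⟨-, h2⟩ | ⟨-, h2⟩
              · exact absurd h2.symm hvu
              · exact h2.symm
            exact ⟨fun hc' => absurd rfl hc', fun _ => hbu ▸ (ihr.1 hbv)⟩
          · have hex : e ≠ x := by
              intro hex; subst hex
              rw [hxu] at hec
              rcases Sym2.eq_iff.mp hec with ⟨h1, -⟩ | ⟨h1, -⟩
              · exact hbv h1.symm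
              · exact hcv h1.symm
            exact ⟨fun _ => (ihr.1 hbv).tail ⟨e, Finset.mem_erase.mpr ⟨hex, heF⟩, hec⟩,
              fun h' => absurd h' hcv⟩
    have hc' : connIn ends F' := by
      intro a ha b hb
      have hav : a ≠ v := fun h => hvnot' (h ▸ ha)
      have hbv : b ≠ v := fun h => hvnot' (h ▸ hb)
      have haF : a ∈ vertsOf ends F := by rw [hverase] at ha; exact (Finset.mem_erase.mp ha).2
      have hbF : b ∈ vertsOf ends F := by rw [hverase] at hb; exact (Finset.mem_erase.mp hb).2
      exact (reroute (hc a haF b hbF) hav).1 hbv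
    have hf' : isForest ends F' := fun C hC hCne => hf C (hC.trans hsub) hCne
    have hne' : F'.Nonempty := ⟨y₀, hy₀F'⟩
    have hd' : ∀ e ∈ F', ¬ (ends e).IsDiag := fun e he => hd e (hsub he)
    obtain ⟨r', child', psel', hinv', hform', hverts', hinj', hr'⟩ :=
      ih F' hssub hd' hc' hf' hne'
    -- the anchor of the new leaf edge
    have huV' : u ∈ vertsOf ends F' := mem_vertsOf.mpr ⟨y₀, hy₀F', hy₀u⟩
    have hvr' : v ≠ r' := by
      intro h
      exact hvnot' (h ▸ (hverts' ▸ Finset.mem_insert_self r' (F'.image child')))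
    have hvchild' : ∀ e ∈ F', child' e ≠ v := by
      intro e he h
      exact hvnot' (hverts' ▸ Finset.mem_insert_of_mem (h ▸ Finset.mem_image_of_mem child' he))
    obtain ⟨pv, hpv1, hpv2⟩ : ∃ pv : Option E, pv.elim r' child' = u ∧
        (∀ y, pv = some y → y ∈ F') := by
      rw [hverts'] at huV'
      rcases Finset.mem_insert.mp huV' with h | h
      · exact ⟨none, h.symm, by simp⟩
      · obtain ⟨y₁, hy₁F', hy₁⟩ := Finset.mem_image.mp h
        exact ⟨some y₁, hy₁, fun y hy => by rw [Option.some_inj] at hy; exact hy ▸ hy₁F'⟩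
    classical
    refine ⟨r', Function.update child' x v, Function.update psel' x pv, ?_, ?_, ?_, ?_, ?_⟩
    · -- invariant
      intro e heF y hy
      by_cases hex : e = x
      · rw [hex, Function.update_self] at hy
        exact hsub (hpv2 y hy)
      · rw [Function.update_of_ne hex] at hy
        exact hsub (hinv' e (Finset.mem_erase.mpr ⟨hex, heF⟩) y hy)
    · -- edge shape
      intro e heF
      by_cases hex : e = x
      · rw [hex, Function.update_self, Function.update_self]
        have hpar : (pv.elim r' (Function.update child' x v)) = u := by
          cases hpv : pv with
          | none => rw [hpv] at hpv1; exact hpv1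
          | some y₁ =>
            have hy₁F' : y₁ ∈ F' := hpv2 y₁ hpv
            have hy₁x : y₁ ≠ x := (Finset.mem_erase.mp hy₁F').1
            rw [hpv] at hpv1
            simpa [Function.update_of_ne hy₁x, Option.elim] using hpv1
        rw [hpar, hxu]
      · have heF' : e ∈ F' := Finset.mem_erase.mpr ⟨hex, heF⟩
        rw [Function.update_of_ne hex, Function.update_of_ne hex]
        have : ((psel' e).elim r' (Function.update child' x v)) =
            ((psel' e).elim r' child') := by
          cases hps : psel' e with
          | none => rfl
          | some y₁ =>
            have hy₁F' : y₁ ∈ F' := hinv' e heF' y₁ hps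
            simp [Function.update_of_ne (Finset.mem_erase.mp hy₁F').1]
        rw [this]
        exact hform' e heF'
    · -- vertex set
      have h1 : vertsOf ends F = insert v (vertsOf ends F') := by
        rw [hverase, Finset.insert_erase hv]
      have h2 : F.image (Function.update child' x v) =
          insert v (F'.image child') := by
        conv_lhs => rw [← Finset.insert_erase hxF]
        rw [Finset.image_insert, Function.update_self]
        congr 1
        apply Finset.image_congr
        intro e he
        exact Function.update_of_ne (Finset.mem_erase.mp he).1 _ _
      rw [h1, h2, hverts', Finset.insert_comm]
    · -- injectivity
      intro a ha b hb hab
      simp only [Finset.coe_insert, Set.mem_insert_iff, Finset.mem_coe] at ha hb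
      by_cases hax : a = x <;> by_cases hbx : b = x
      · rw [hax, hbx]
      · exfalso
        have hbF' : b ∈ F' := Finset.mem_erase.mpr ⟨hbx, hb⟩
        rw [hax, Function.update_self, Function.update_of_ne hbx] at hab
        exact hvchild' b hbF' hab.symm
      · exfalso
        have haF' : a ∈ F' := Finset.mem_erase.mpr ⟨hax, ha⟩
        rw [hbx, Function.update_self, Function.update_of_ne hax] at hab
        exact hvchild' a haF' hab
      · have haF' : a ∈ F' := Finset.mem_erase.mpr ⟨hax, ha⟩
        have hbF' : b ∈ F' := Finset.mem_erase.mpr ⟨hbx, hb⟩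
        rw [Function.update_of_ne hax, Function.update_of_ne hbx] at hab
        exact hinj' (Finset.mem_coe.mpr haF') (Finset.mem_coe.mpr hbF') hab
    · -- root not a child
      intro h
      obtain ⟨e, heF, he⟩ := Finset.mem_image.mp h
      by_cases hex : e = x
      · subst hex
        rw [Function.update_self] at he
        exact hvr' he
      · have heF' : e ∈ F' := Finset.mem_erase.mpr ⟨hex, heF⟩
        rw [Function.update_of_ne hex] at he
        exact hr' (Finset.mem_image.mpr ⟨e, heF', he⟩)

lemma tree_verts_card (ends : E → Sym2 V) (F : Finset E)
    (hd : ∀ e ∈ F, ¬ (ends e).IsDiag) (hc : connIn ends F) (hf : isForest ends F)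
    (hne : F.Nonempty) : (vertsOf ends F).card = F.card + 1 := by
  obtain ⟨r, child, psel, -, -, hverts, hinj, hr⟩ := tree_struct ends F hd hc hf hne
  rw [hverts, Finset.card_insert_of_notMem hr, Finset.card_image_of_injOn hinj]

end Struct

section Bip

lemma bipEnds_not_diag {n m : ℕ} (T : Finset (Fin n)) (a : {x // x ∈ T} → Fin m × Fin m)
    (e : {x // x ∈ T}) : ¬ (bipEnds T a e).IsDiag := by
  intro h
  exact absurd (Sym2.mk_isDiag_iff.mp h) (by simp [bipEnds])

lemma isTreeSub_card {n m k : ℕ} {T : Finset (Fin n)} {a : {x // x ∈ T} → Fin m × Fin m}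
    (hT : T.Nonempty) (h : isTreeSub k T a) : k = T.card + 1 := by
  have : Nonempty {x // x ∈ T} := Finset.nonempty_coe_sort.mpr hT
  have hcard := tree_verts_card (bipEnds T a) Finset.univ
    (fun e _ => bipEnds_not_diag T a e) h.1 h.2.1 Finset.univ_nonempty
  rw [h.2.2] at hcard
  rw [hcard, Finset.card_univ, Fintype.card_coe]

lemma isTreeSub_empty_vertsOf {n m : ℕ} (a : {x // x ∈ (∅ : Finset (Fin n))} → Fin m × Fin m) :
    vertsOf (bipEnds ∅ a) Finset.univ = ∅ := by
  ext w
  simp only [Finset.notMem_empty, iff_false]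
  intro hw
  obtain ⟨e, -, -⟩ := (by simpa [vertsOf] using hw : ∃ e ∈ Finset.univ, w ∈ bipEnds ∅ a e)
  exact absurd e.2 (Finset.notMem_empty e.1)

lemma isTreeSub_nonempty {n m k : ℕ} {T : Finset (Fin n)} {a : {x // x ∈ T} → Fin m × Fin m}
    (hk : 1 ≤ k) (h : isTreeSub k T a) : T.Nonempty := by
  rcases T.eq_empty_or_nonempty with rfl | hT
  · have := h.2.2
    rw [isTreeSub_empty_vertsOf a] at this
    simp at this; omega
  · exact hT

open Classical in
lemma count_le {n m : ℕ} (hm : 1 ≤ m) (k : ℕ) (T : Finset (Fin n)) (hT : T.Nonempty) :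
    (Finset.univ.filter fun a : {x // x ∈ T} → Fin m × Fin m => isTreeSub k T a).card
      ≤ (2 * m) ^ (T.card + 1) * (T.card + 1) ^ T.card := by
  classical
  have hV : Nonempty (Fin m ⊕ Fin m) := ⟨Sum.inl ⟨0, hm⟩⟩
  have hE : Nonempty {x // x ∈ T} := Finset.nonempty_coe_sort.mpr hT
  have key : ∀ a : {x // x ∈ T} → Fin m × Fin m, isTreeSub k T a →
      ∃ tr : (Fin m ⊕ Fin m) × ({x // x ∈ T} → Fin m ⊕ Fin m) ×
        ({x // x ∈ T} → Option {x // x ∈ T}),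
        ∀ x, bipEnds T a x = s(tr.2.1 x, ((tr.2.2 x).elim tr.1 tr.2.1)) := by
    intro a h
    obtain ⟨r, child, psel, -, hform, -, -, -⟩ := tree_struct (bipEnds T a) Finset.univ
      (fun e _ => bipEnds_not_diag T a e) h.1 h.2.1 Finset.univ_nonempty
    exact ⟨(r, child, psel), fun x => hform x (Finset.mem_univ x)⟩
  choose Φ hΦ using key
  set Ψ : ({x // x ∈ T} → Fin m × Fin m) →
      (Fin m ⊕ Fin m) × ({x // x ∈ T} → Fin m ⊕ Fin m) × ({x // x ∈ T} → Option {x // x ∈ T}) :=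
    fun a => if h : isTreeSub k T a then Φ a h else Classical.arbitrary _ with hΨ
  have hinj : Set.InjOn Ψ ↑(Finset.univ.filter
      fun a : {x // x ∈ T} → Fin m × Fin m => isTreeSub k T a) := by
    intro a₁ h₁ a₂ h₂ heq
    simp only [Finset.coe_filter, Set.mem_setOf_eq] at h₁ h₂
    have ht₁ := h₁.2
    have ht₂ := h₂.2
    rw [hΨ] at heq
    simp only [dif_pos ht₁, dif_pos ht₂] at heq
    funext x
    have e1 := hΦ a₁ ht₁ x
    have e2 := hΦ a₂ ht₂ x
    rw [heq] at e1
    have e3 : bipEnds T a₁ x = bipEnds T a₂ x := e1.trans e2.symm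
    unfold bipEnds at e3
    rcases Sym2.eq_iff.mp e3 with ⟨h1, h2⟩ | ⟨h1, -⟩
    · exact Prod.ext_iff.mpr ⟨Sum.inl.inj h1, Sum.inr.inj h2⟩
    · exact absurd h1 (by simp)
  calc (Finset.univ.filter fun a : {x // x ∈ T} → Fin m × Fin m => isTreeSub k T a).card
      ≤ (Finset.univ : Finset ((Fin m ⊕ Fin m) × ({x // x ∈ T} → Fin m ⊕ Fin m) ×
          ({x // x ∈ T} → Option {x // x ∈ T}))).card :=
        Finset.card_le_card_of_injOn Ψ (fun a _ => Finset.mem_univ _) hinj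
    _ = (m + m) * ((m + m) ^ T.card * (T.card + 1) ^ T.card) := by
        simp [Finset.card_univ, Fintype.card_fun, Fintype.card_coe]
    _ ≤ (2 * m) ^ (T.card + 1) * (T.card + 1) ^ T.card := by
        rw [two_mul, pow_succ]
        ring_nf
        exact le_refl _

end Bip

section Sums

lemma expTrees_zero (n m : ℕ) : expTrees n m 0 = 1 := by
  unfold expTrees
  rw [Finset.sum_eq_single (∅ : Finset (Fin n))]
  · have hE : IsEmpty {x // x ∈ (∅ : Finset (Fin n))} :=
      ⟨fun e => absurd e.2 (Finset.notMem_empty e.1)⟩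
    have htrue : ∀ a : {x // x ∈ (∅ : Finset (Fin n))} → Fin m × Fin m, isTreeSub 0 ∅ a := by
      intro a
      refine ⟨?_, ?_, ?_⟩
      · intro v hv
        rw [isTreeSub_empty_vertsOf a] at hv
        exact absurd hv (Finset.notMem_empty v)
      · intro C hC hCne
        have hCe : C = ∅ := Finset.subset_empty.mp (by rwa [Finset.univ_eq_empty] at hC)
        rw [hCe] at hCne
        exact absurd hCne (Finset.not_nonempty_empty)
      · rw [isTreeSub_empty_vertsOf a]; simp
    simp [htrue]
  · intro T _ hT
    apply Finset.sum_eq_zero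
    intro a _
    rw [if_neg]
    intro htree
    obtain ⟨x, hx⟩ := Finset.nonempty_iff_ne_empty.mpr hT
    have hmem : Sum.inl (a ⟨x, hx⟩).1 ∈ vertsOf (bipEnds T a) Finset.univ :=
      mem_vertsOf.mpr ⟨⟨x, hx⟩, Finset.mem_univ _, by
        show _ ∈ s(Sum.inl (a ⟨x, hx⟩).1, Sum.inr (a ⟨x, hx⟩).2)
        exact Sym2.mem_mk_left _ _⟩
    rw [Finset.card_eq_zero.mp htree.2.2] at hmem
    exact absurd hmem (Finset.notMem_empty _)
  · intro h
    exact absurd (Finset.mem_univ _) h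

lemma expTrees_one (n m : ℕ) : expTrees n m 1 = 0 := by
  unfold expTrees
  apply Finset.sum_eq_zero
  intro T _
  apply Finset.sum_eq_zero
  intro a _
  rw [if_neg]
  intro htree
  rcases T.eq_empty_or_nonempty with rfl | hT
  · have h0 := htree.2.2
    rw [isTreeSub_empty_vertsOf a] at h0
    simp at h0
  · have h1 := isTreeSub_card hT htree
    have h2 : T.card = 0 := by omega
    exact absurd (Finset.card_eq_zero.mp h2) (Finset.nonempty_iff_ne_empty.mp hT)

open Classical in
lemma expTrees_le_choose {n m k : ℕ} (hm : 1 ≤ m) (hk : 1 ≤ k) :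
    expTrees n m k ≤ (n.choose (k-1) : ℝ) * ((2*(m:ℝ))^k * (k:ℝ)^(k-1)) *
      (1/(m:ℝ))^(2*(k-1)) := by
  unfold expTrees
  have hterm : ∀ T : Finset (Fin n),
      (∑ a : {x // x ∈ T} → Fin m × Fin m,
        if isTreeSub k T a then (1/(m:ℝ))^(2*T.card) else 0)
        ≤ if T.card = k - 1 then ((2*(m:ℝ))^k * (k:ℝ)^(k-1)) * (1/(m:ℝ))^(2*(k-1))
          else 0 := by
    intro T
    have hsum : (∑ a : {x // x ∈ T} → Fin m × Fin m,
        if isTreeSub k T a then (1/(m:ℝ))^(2*T.card) else 0)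
        = ((Finset.univ.filter fun a : {x // x ∈ T} → Fin m × Fin m =>
            isTreeSub k T a).card : ℝ) * (1/(m:ℝ))^(2*T.card) := by
      rw [Finset.sum_ite, Finset.sum_const, Finset.sum_const_zero, add_zero, nsmul_eq_mul]
    rw [hsum]
    by_cases hc : (Finset.univ.filter fun a : {x // x ∈ T} → Fin m × Fin m =>
        isTreeSub k T a).card = 0
    · rw [hc]
      push_cast
      rw [zero_mul]
      split_ifs
      · positivity
      · exact le_refl _
    · obtain ⟨a, ha⟩ := Finset.card_ne_zero.mp hc
      have htree : isTreeSub k T a := (Finset.mem_filter.mp ha).2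
      have hT : T.Nonempty := isTreeSub_nonempty hk htree
      have hkeq : k = T.card + 1 := isTreeSub_card hT htree
      have hTc : T.card = k - 1 := by omega
      rw [if_pos hTc]
      have hcount := count_le hm k T hT
      rw [hTc] at hcount
      have hk1 : k - 1 + 1 = k := by omega
      rw [hk1] at hcount
      have hcast : ((Finset.univ.filter fun a : {x // x ∈ T} → Fin m × Fin m =>
          isTreeSub k T a).card : ℝ) ≤ (2*(m:ℝ))^k * (k:ℝ)^(k-1) := by
        calc ((Finset.univ.filter fun a : {x // x ∈ T} → Fin m × Fin m =>
            isTreeSub k T a).card : ℝ) ≤ (((2*m)^k * k^(k-1) : ℕ) : ℝ) :=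
              Nat.cast_le.mpr hcount
          _ = (2*(m:ℝ))^k * (k:ℝ)^(k-1) := by push_cast; ring
      rw [hTc]
      exact mul_le_mul_of_nonneg_right hcast (by positivity)
  calc (∑ T : Finset (Fin n), ∑ a : {x // x ∈ T} → Fin m × Fin m,
        if isTreeSub k T a then (1/(m:ℝ))^(2*T.card) else 0)
      ≤ ∑ T : Finset (Fin n), if T.card = k - 1 then
          ((2*(m:ℝ))^k * (k:ℝ)^(k-1)) * (1/(m:ℝ))^(2*(k-1)) else 0 :=
        Finset.sum_le_sum (fun T _ => hterm T)
    _ = ((Finset.univ.filter fun T : Finset (Fin n) => T.card = k-1).card : ℝ) *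
          (((2*(m:ℝ))^k * (k:ℝ)^(k-1)) * (1/(m:ℝ))^(2*(k-1))) := by
        rw [Finset.sum_ite, Finset.sum_const, Finset.sum_const_zero, add_zero, nsmul_eq_mul]
    _ = (n.choose (k-1) : ℝ) * ((2*(m:ℝ))^k * (k:ℝ)^(k-1)) * (1/(m:ℝ))^(2*(k-1)) := by
        have hfil : (Finset.univ.filter fun T : Finset (Fin n) => T.card = k-1)
            = Finset.powersetCard (k-1) (Finset.univ : Finset (Fin n)) := by
          ext T
          simp [Finset.mem_powersetCard]
        rw [hfil, Finset.card_powersetCard, Finset.card_univ, Fintype.card_fin]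
        ring

end Sums

section Analytic

open Real

lemma pow_le_factorial_exp (k : ℕ) (hk : 1 ≤ k) :
    ((k:ℝ))^(k-1) ≤ (Nat.factorial (k-1) : ℝ) * (Real.exp 1)^k := by
  have hfac : (0:ℝ) < (Nat.factorial (k-1) : ℝ) := by
    exact_mod_cast Nat.factorial_pos (k-1)
  have h1 : ((k:ℝ))^(k-1) / (Nat.factorial (k-1) : ℝ) ≤ Real.exp k := by
    calc ((k:ℝ))^(k-1) / (Nat.factorial (k-1) : ℝ)
        ≤ ∑ i ∈ Finset.range k, (k:ℝ)^i / (Nat.factorial i : ℝ) :=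
          Finset.single_le_sum (f := fun i => (k:ℝ)^i / (Nat.factorial i : ℝ))
            (fun i _ => by positivity) (Finset.mem_range.mpr (by omega))
      _ ≤ Real.exp k := Real.sum_le_exp_of_nonneg (by positivity) k
  rw [div_le_iff₀ hfac] at h1
  rw [Real.exp_one_pow]
  linarith [h1]

lemma analytic_common {n m k : ℕ} (hk : 1 ≤ k) :
    (n.choose (k-1) : ℝ) * ((2*(m:ℝ))^k * (k:ℝ)^(k-1)) * (1/(m:ℝ))^(2*(k-1)) ≤
    (n:ℝ)^(k-1) * ((2*(m:ℝ))^k * (Real.exp 1)^k) * (1/(m:ℝ))^(2*(k-1)) := by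
  have hfac : (0:ℝ) < (Nat.factorial (k-1) : ℝ) := by
    exact_mod_cast Nat.factorial_pos (k-1)
  have hc : (n.choose (k-1) : ℝ) ≤ ((n:ℝ))^(k-1) / (Nat.factorial (k-1) : ℝ) := by
    have := Nat.choose_le_pow_div (α := ℝ) (k-1) n
    simpa using this
  have hp := pow_le_factorial_exp k hk
  calc (n.choose (k-1) : ℝ) * ((2*(m:ℝ))^k * (k:ℝ)^(k-1)) * (1/(m:ℝ))^(2*(k-1))
      ≤ (((n:ℝ))^(k-1) / (Nat.factorial (k-1) : ℝ)) *
          ((2*(m:ℝ))^k * ((Nat.factorial (k-1) : ℝ) * (Real.exp 1)^k)) *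
          (1/(m:ℝ))^(2*(k-1)) := by
        gcongr
    _ = (n:ℝ)^(k-1) * ((2*(m:ℝ))^k * (Real.exp 1)^k) * (1/(m:ℝ))^(2*(k-1)) := by
        rw [div_mul_eq_mul_div, div_mul_eq_mul_div, div_eq_iff (ne_of_gt hfac)]
        ring

lemma analytic_main {n m k : ℕ} (hn : 1 ≤ n) (hm6 : 6 * n ≤ m) (hk : 1 ≤ k) :
    (n.choose (k-1) : ℝ) * ((2*(m:ℝ))^k * (k:ℝ)^(k-1)) * (1/(m:ℝ))^(2*(k-1))
      ≤ 6 * (m:ℝ) * (Real.exp 1 / 3)^k := by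
  obtain ⟨t, rfl⟩ : ∃ t, k = t + 1 := ⟨k-1, by omega⟩
  have hm0 : (0:ℝ) < (m:ℝ) := by
    have h1 : 0 < m := by omega
    exact_mod_cast h1
  have hnm : (n:ℝ) ≤ (m:ℝ)/6 := by
    have h2 : (6:ℝ) * (n:ℝ) ≤ (m:ℝ) := by exact_mod_cast hm6
    linarith
  have hE : (0:ℝ) < Real.exp 1 := Real.exp_pos 1
  refine le_trans (analytic_common hk) ?_
  simp only [Nat.add_sub_cancel]
  have step1 : (n:ℝ)^t * ((2*(m:ℝ))^(t+1) * (Real.exp 1)^(t+1)) * (1/(m:ℝ))^(2*t)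
      ≤ ((m:ℝ)/6)^t * ((2*(m:ℝ))^(t+1) * (Real.exp 1)^(t+1)) * (1/(m:ℝ))^(2*t) := by
    gcongr
  refine le_trans step1 (le_of_eq ?_)
  have hbase : ((m:ℝ)/6) * ((2*(m:ℝ)) * (Real.exp 1 * (1/(m:ℝ))^2)) = Real.exp 1 / 3 := by
    field_simp
    ring
  have collect : ∀ (a b c d : ℝ), a^t * (b^(t+1) * c^(t+1)) * d^(2*t)
      = (a * (b * (c * d^2)))^t * (b*c) := by
    intro a b c d
    ring
  calc ((m:ℝ)/6)^t * ((2*(m:ℝ))^(t+1) * (Real.exp 1)^(t+1)) * (1/(m:ℝ))^(2*t)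
      = (((m:ℝ)/6) * ((2*(m:ℝ)) * (Real.exp 1 * (1/(m:ℝ))^2)))^t *
          ((2*(m:ℝ)) * Real.exp 1) := collect _ _ _ _
    _ = (Real.exp 1 / 3)^t * ((2*(m:ℝ)) * Real.exp 1) := by rw [hbase]
    _ = 6 * (m:ℝ) * (Real.exp 1 / 3)^(t+1) := by
        have h3 : (Real.exp 1 / 3)^(t+1) = (Real.exp 1/3)^t * (Real.exp 1/3) := pow_succ _ _
        rw [h3]
        ring

lemma analytic_two {n m k : ℕ} (hn : 1 ≤ n) (hm6 : 6 * n ≤ m) (hk : 2 ≤ k) :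
    (n.choose (k-1) : ℝ) * ((2*(m:ℝ))^k * (k:ℝ)^(k-1)) * (1/(m:ℝ))^(2*(k-1))
      ≤ 36 * (n:ℝ) * (Real.exp 1 / 3)^k := by
  obtain ⟨s, rfl⟩ : ∃ s, k = s + 2 := ⟨k-2, by omega⟩
  have hm0 : (0:ℝ) < (m:ℝ) := by
    have h1 : 0 < m := by omega
    exact_mod_cast h1
  have hn0 : (0:ℝ) ≤ (n:ℝ) := Nat.cast_nonneg n
  have hE : (0:ℝ) < Real.exp 1 := Real.exp_pos 1
  have h6 : (6:ℝ) * (n:ℝ) ≤ (m:ℝ) := by exact_mod_cast hm6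
  refine le_trans (analytic_common (by omega)) ?_
  have h21 : s + 2 - 1 = s + 1 := by omega
  rw [h21]
  have hbase : (n:ℝ) * ((2*(m:ℝ)) * (Real.exp 1 * (1/(m:ℝ))^2)) ≤ Real.exp 1 / 3 := by
    have hb2 : (n:ℝ) * ((2*(m:ℝ)) * (Real.exp 1 * (1/(m:ℝ))^2))
        = 2*(n:ℝ)*Real.exp 1/(m:ℝ) := by
      field_simp
    rw [hb2, div_le_div_iff₀ hm0 (by norm_num : (0:ℝ) < 3)]
    nlinarith [hE.le]
  have hbase0 : (0:ℝ) ≤ (n:ℝ) * ((2*(m:ℝ)) * (Real.exp 1 * (1/(m:ℝ))^2)) := by positivity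
  have hquad : ((2*(m:ℝ))^2 * (Real.exp 1)^2 * (1/(m:ℝ))^2) = 4 * (Real.exp 1)^2 := by
    field_simp
    ring
  calc (n:ℝ)^(s+1) * ((2*(m:ℝ))^(s+2) * (Real.exp 1)^(s+2)) * (1/(m:ℝ))^(2*(s+1))
      = ((n:ℝ) * ((2*(m:ℝ)) * (Real.exp 1 * (1/(m:ℝ))^2)))^s *
          ((n:ℝ) * ((2*(m:ℝ))^2 * (Real.exp 1)^2 * (1/(m:ℝ))^2)) := by
        ring
    _ ≤ (Real.exp 1/3)^s *
          ((n:ℝ) * ((2*(m:ℝ))^2 * (Real.exp 1)^2 * (1/(m:ℝ))^2)) := by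
        gcongr
    _ = (Real.exp 1/3)^s * ((n:ℝ) * (4 * (Real.exp 1)^2)) := by rw [hquad]
    _ = 36 * (n:ℝ) * (Real.exp 1 / 3)^(s+2) := by
        have h3 : (Real.exp 1/3)^(s+2) = (Real.exp 1/3)^s * ((Real.exp 1)^2/9) := by
          rw [pow_add]
          congr 1
          ring
        rw [h3]
        ring

end Analytic

lemma expTrees_le_36 {n m k : ℕ} (hn : 1 ≤ n) (hm6 : 6 * n ≤ m) :
    expTrees n m k ≤ 36 * (n:ℝ) * (Real.exp 1 / 3)^k := by
  have hm : 1 ≤ m := by omega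
  have hn1 : (1:ℝ) ≤ (n:ℝ) := by exact_mod_cast hn
  match k with
  | 0 =>
    rw [expTrees_zero, pow_zero, mul_one]
    linarith
  | 1 =>
    rw [expTrees_one]
    positivity
  | (j+2) =>
    exact le_trans (expTrees_le_choose hm (by omega)) (analytic_two hn hm6 (by omega))

/-- For `m ≥ 6n` the expected number of `k`-vertex tree
subgraphs of the fully random cuckoo graph is at most `2m²(e/3)^k`; in
particular for every `α > 0` there are `β, C` such that for `k ≥ β·log n` the
expectation is at most `C·n^{-α}`. -/
theorem expected_trees_le :
    (∀ n m k : ℕ, 1 ≤ m → 6 * n ≤ m →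
      expTrees n m k ≤ 2 * (m : ℝ) ^ 2 * (Real.exp 1 / 3) ^ k) ∧
    ∀ α : ℝ, 0 < α → ∃ β C : ℝ, 0 < β ∧ 0 < C ∧
      ∀ n m k : ℕ, 1 ≤ n → 6 * n ≤ m → β * Real.log n ≤ (k : ℝ) →
        expTrees n m k ≤ C * (n : ℝ) ^ (-α) := by
  have hlog3 : 1 < Real.log 3 := by
    rw [Real.lt_log_iff_exp_lt (by norm_num : (0:ℝ) < 3)]
    calc Real.exp 1 < 2.7182818286 := Real.exp_one_lt_d9
      _ < 3 := by norm_num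
  constructor
  · intro n m k hm hm6
    have hm1 : (1:ℝ) ≤ (m:ℝ) := by exact_mod_cast hm
    rcases Nat.eq_zero_or_pos k with rfl | hk
    · rw [expTrees_zero, pow_zero, mul_one]
      nlinarith
    by_cases hk1 : k = 1
    · rw [hk1, expTrees_one]
      positivity
    rcases Nat.eq_zero_or_pos n with rfl | hn
    · refine le_trans (expTrees_le_choose hm hk) ?_
      have hch : (Nat.choose 0 (k-1) : ℝ) = 0 := by
        rw [Nat.choose_eq_zero_of_lt (by omega)]
        simp
      rw [hch, zero_mul, zero_mul]
      positivity
    · have hm3 : (3:ℝ) ≤ (m:ℝ) := by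
        have : 6 ≤ m := by omega
        have h6 : (6:ℝ) ≤ (m:ℝ) := by exact_mod_cast this
        linarith
      refine le_trans (expTrees_le_choose hm hk) (le_trans (analytic_main hn hm6 hk) ?_)
      have hp : (0:ℝ) ≤ (Real.exp 1 / 3)^k := by positivity
      have h6m : 6*(m:ℝ) ≤ 2*(m:ℝ)^2 := by nlinarith
      exact mul_le_mul_of_nonneg_right h6m hp
  · intro α hα
    have hd : 0 < Real.log 3 - 1 := sub_pos.mpr hlog3
    refine ⟨(α+1)/(Real.log 3 - 1), 36, by positivity, by norm_num, ?_⟩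
    intro n m k hn hm6 hβk
    have hn0 : (0:ℝ) < (n:ℝ) := by exact_mod_cast hn
    have hn1 : (1:ℝ) ≤ (n:ℝ) := by exact_mod_cast hn
    have hlogn : 0 ≤ Real.log n := Real.log_nonneg hn1
    have h2 : (Real.exp 1/3)^k = Real.exp ((k:ℝ) * (1 - Real.log 3)) := by
      rw [show (Real.exp 1 / 3 : ℝ) = Real.exp (1 - Real.log 3) by
        rw [Real.exp_sub, Real.exp_log (by norm_num : (0:ℝ) < 3)], ← Real.exp_nat_mul]
    have h3 : (k:ℝ) * (1 - Real.log 3) ≤ -((α+1) * Real.log n) := by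
      have hmul : (α+1)/(Real.log 3 - 1) * Real.log n * (Real.log 3 - 1)
          = (α+1) * Real.log n := by
        field_simp
      have := mul_le_mul_of_nonneg_right hβk (le_of_lt hd)
      nlinarith
    have h4 : Real.exp (-((α+1) * Real.log n)) = (n:ℝ)^(-(α+1)) := by
      rw [Real.rpow_def_of_pos hn0]
      congr 1
      ring
    have h5 : (n:ℝ) * (n:ℝ)^(-(α+1)) = (n:ℝ)^(-α) := by
      rw [show -(α+1) = -1 + -α by ring, Real.rpow_add hn0, Real.rpow_neg_one]
      field_simp
    calc expTrees n m k ≤ 36 * (n:ℝ) * (Real.exp 1 / 3)^k := expTrees_le_36 hn hm6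
      _ ≤ 36 * (n:ℝ) * Real.exp (-((α+1) * Real.log n)) := by
          rw [h2]
          have := Real.exp_le_exp.mpr h3
          nlinarith
      _ = 36 * ((n:ℝ) * (n:ℝ)^(-(α+1))) := by rw [h4]; ring
      _ = 36 * (n:ℝ)^(-α) := by rw [h5]
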